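/- arXiv:1505.02365 — 2 statements merged into one kernel-verified Lean document; each statement's English description precedes it below -/
import Mathlib

section
/- Let f : ℝ → Mₙ(ℂ) be continuous (entrywise) with f(k) unitary for every k. Fix k₀ ∈ ℝ and θ₀ ∈ (0,π) such that f(k₀) has no eigenvalue of the form e^{iφ} with 0 < |φ| ≤ θ₀, and let m be the algebraic multiplicity of 1 as an eigenvalue of f(k₀). Then there exists δ > 0 such that for every k with |k − k₀| < δ: f(k) has no eigenvalue equal to e^{iθ₀} or e^{−iθ₀}, and the number of eigenvalues of f(k), counted with algebraic multiplicity, of the form e^{iφ} with |φ| < θ₀ equals m. -/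
open Matrix Polynomial
open scoped Classical


lemma eval_charpoly' {n : ℕ} (M : Matrix (Fin n) (Fin n) ℂ) (z : ℂ) :
    M.charpoly.eval z = (z • (1 : Matrix (Fin n) (Fin n) ℂ) - M).det := by
  rw [Matrix.charpoly, _root_.eval_det, Matrix.matPolyEquiv_charmatrix]
  rw [eval_sub, eval_X, eval_C]
  congr 1
  simp [Matrix.scalar, Matrix.smul_one_eq_diagonal]

open scoped Matrix.Norms.L2Operator in
lemma abs_one_of_isRoot {n : ℕ} {M : Matrix (Fin n) (Fin n) ℂ}
    (hM : M ∈ Matrix.unitaryGroup (Fin n) ℂ) {z : ℂ}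
    (hz : M.charpoly.IsRoot z) : ‖z‖ = 1 := by
  have hdet : (z • (1 : Matrix (Fin n) (Fin n) ℂ) - M).det = 0 := by
    rw [← eval_charpoly']; exact hz
  have hsp : z ∈ spectrum ℂ M := by
    rw [spectrum.mem_iff]
    intro h
    rw [Algebra.algebraMap_eq_smul_one] at h
    have := (Matrix.isUnit_iff_isUnit_det _).mp h
    rw [hdet] at this
    exact this.ne_zero rfl
  have := spectrum.subset_circle_of_unitary hM hsp
  simpa using this

lemma exists_enum {n : ℕ} (s : Multiset ℂ) (hs : Multiset.card s = n) :
    ∃ g : Fin n → ℂ, Multiset.map g Finset.univ.val = s := by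
  have hl : s.toList.length = n := by simpa using hs
  subst hl
  exact ⟨s.toList.get, by rw [Fin.univ_val_map, List.ofFn_get, Multiset.coe_toList]⟩

lemma mem_arc {θ₀ : ℝ} (h1 : 0 < θ₀) (h2 : θ₀ < Real.pi) {z : ℂ} (hz : ‖z‖ = 1) :
    (∃ φ : ℝ, |φ| < θ₀ ∧ z = Complex.exp (Complex.I * φ)) ↔ Real.cos θ₀ < z.re := by
  constructor
  · rintro ⟨φ, hφ, rfl⟩
    rw [mul_comm, Complex.exp_ofReal_mul_I_re]
    have := Real.strictAntiOn_cos ⟨abs_nonneg _, (hφ.trans h2).le⟩ ⟨h1.le, h2.le⟩ hφ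
    rwa [Real.cos_abs] at this
  · intro h
    have hz0 : z ≠ 0 := by
      intro h0; rw [h0] at hz; simp at hz
    have hcos : Real.cos z.arg = z.re := by
      rw [Complex.cos_arg hz0, hz, div_one]
    have hb : |z.arg| ≤ Real.pi := Complex.abs_arg_le_pi z
    refine ⟨z.arg, ?_, ?_⟩
    · by_contra hgt
      push_neg at hgt
      rcases lt_or_eq_of_le hgt with hlt | heq
      · have := Real.strictAntiOn_cos ⟨h1.le, h2.le⟩ ⟨abs_nonneg _, hb⟩ hlt
        rw [Real.cos_abs, hcos] at this
        linarith
      · rw [heq, Real.cos_abs, hcos] at h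
        linarith
    · rw [mul_comm]
      have := Complex.norm_mul_exp_arg_mul_I z
      rw [hz] at this
      simpa using this.symm

/-- Continuity of the local eigenvalue count: if `f` is a continuous unitary-valued family and
`f(k₀)` has no eigenvalue `e^{iφ}` with `0 < |φ| ≤ θ₀`, where `m` is the algebraic multiplicity
of `1` as an eigenvalue of `f(k₀)`, then for all `k` close to `k₀` the matrix `f(k)` has no
eigenvalue `e^{±iθ₀}` and has exactly `m` eigenvalues (with algebraic multiplicity) of the form
`e^{iφ}` with `|φ| < θ₀`. -/
theorem eigCount_near {n : ℕ} (f : ℝ → Matrix (Fin n) (Fin n) ℂ)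
    (hcont : ∀ i j : Fin n, Continuous fun k => f k i j)
    (hunit : ∀ k : ℝ, f k ∈ Matrix.unitaryGroup (Fin n) ℂ)
    (k₀ θ₀ : ℝ) (hθ₀ : 0 < θ₀ ∧ θ₀ < Real.pi)
    (hgap : ∀ φ : ℝ, 0 < |φ| → |φ| ≤ θ₀ →
      ¬ (f k₀).charpoly.IsRoot (Complex.exp (Complex.I * φ)))
    (m : ℕ) (hm : m = (f k₀).charpoly.rootMultiplicity 1) :
    ∃ δ : ℝ, 0 < δ ∧ ∀ k : ℝ, |k - k₀| < δ →
      (¬ (f k).charpoly.IsRoot (Complex.exp (Complex.I * θ₀)) ∧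
        ¬ (f k).charpoly.IsRoot (Complex.exp (-(Complex.I * θ₀)))) ∧
      Multiset.countP
          (fun z => ∃ φ : ℝ, |φ| < θ₀ ∧ z = Complex.exp (Complex.I * φ))
          (f k).charpoly.roots = m := by
  obtain ⟨hθpos, hθpi⟩ := hθ₀
  set c := Real.cos θ₀ with hc
  by_contra hcon
  push_neg at hcon
  have hseq : ∀ j : ℕ, ∃ k : ℝ, |k - k₀| < 1 / ((j : ℝ) + 1) ∧
      ((¬ (f k).charpoly.IsRoot (Complex.exp (Complex.I * θ₀)) ∧
        ¬ (f k).charpoly.IsRoot (Complex.exp (-(Complex.I * θ₀)))) →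
      Multiset.countP
          (fun z => ∃ φ : ℝ, |φ| < θ₀ ∧ z = Complex.exp (Complex.I * φ))
          (f k).charpoly.roots ≠ m) := fun j => hcon _ (by positivity)
  choose k hk hbad using hseq
  -- the sequence tends to k₀
  have htend : Filter.Tendsto k Filter.atTop (nhds k₀) := by
    rw [tendsto_iff_dist_tendsto_zero]
    apply squeeze_zero (fun j => dist_nonneg) (fun j => (Real.dist_eq _ _).le.trans_lt (hk j) |>.le)
    exact tendsto_one_div_add_atTop_nhds_zero_nat
  -- basic facts about charpolys
  set p : ℝ → Polynomial ℂ := fun x => (f x).charpoly with hp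
  have hmono : ∀ x, (p x).Monic := fun x => Matrix.charpoly_monic _
  have hpne : ∀ x, p x ≠ 0 := fun x => (hmono x).ne_zero
  have hdeg : ∀ x, (p x).natDegree = n := fun x => by
    rw [hp]; rw [Matrix.charpoly_natDegree_eq_dim, Fintype.card_fin]
  have hcard : ∀ x, Multiset.card (p x).roots = n := fun x => by
    rw [(Polynomial.splits_iff_card_roots).mp (IsAlgClosed.splits _), hdeg]
  -- enumerate the roots
  have genum : ∀ j : ℕ, ∃ g : Fin n → ℂ, Multiset.map g Finset.univ.val = (p (k j)).roots :=
    fun j => exists_enum _ (hcard _)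
  choose g hg using genum
  have habs : ∀ j i, ‖g j i‖ = 1 := by
    intro j i
    refine abs_one_of_isRoot (hunit (k j)) ?_
    refine Polynomial.isRoot_of_mem_roots ?_
    rw [← hg j]
    exact Multiset.mem_map_of_mem _ (Finset.mem_univ_val _)
  -- compactness: a convergent subsequence of root tuples
  have hK : IsCompact (Set.univ.pi fun _ : Fin n => Metric.sphere (0 : ℂ) 1) :=
    isCompact_univ_pi fun _ => isCompact_sphere _ _
  obtain ⟨z, hzK, φs, hφmono, hφtend⟩ := hK.tendsto_subseq (x := g)
    (fun j => by
      intro i _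
      rw [mem_sphere_zero_iff_norm]
      exact habs j i)
  have hzabs : ∀ i, ‖z i‖ = 1 := fun i => by
    have := hzK i (Set.mem_univ i)
    rwa [mem_sphere_zero_iff_norm] at this
  have hktend : Filter.Tendsto (fun j => k (φs j)) Filter.atTop (nhds k₀) :=
    htend.comp hφmono.tendsto_atTop
  -- evaluation of charpoly as product over enumerated roots
  have hevalprod : ∀ x : ℝ, ∀ w : ℂ,
      (p x).eval w = ((p x).roots.map fun a => w - a).prod := by
    intro x w
    conv_lhs => rw [← Polynomial.prod_multiset_X_sub_C_of_monic_of_roots_card_eq (hmono x)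
      (by rw [hcard, hdeg])]
    rw [Polynomial.eval_multiset_prod, Multiset.map_map]
    simp
  -- identify the limit polynomial
  have key : ∀ w : ℂ, (p k₀).eval w = ∏ i, (w - z i) := by
    intro w
    have hcontdet : Continuous fun x : ℝ => (p x).eval w := by
      have : (fun x : ℝ => (p x).eval w) =
          fun x : ℝ => (w • (1 : Matrix (Fin n) (Fin n) ℂ) - f x).det := by
        funext x; exact eval_charpoly' (f x) w
      rw [this]
      exact Continuous.matrix_det (continuous_matrix fun i j =>
        (continuous_const.sub (hcont i j)))
    have h1 : Filter.Tendsto (fun j => (p (k (φs j))).eval w) Filter.atTop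
        (nhds ((p k₀).eval w)) := (hcontdet.tendsto k₀).comp hktend
    have h2 : Filter.Tendsto (fun j => ∏ i, (w - g (φs j) i)) Filter.atTop
        (nhds (∏ i, (w - z i))) := by
      refine tendsto_finset_prod _ fun i _ => tendsto_const_nhds.sub ?_
      exact ((continuous_apply i).tendsto z).comp hφtend
    have h3 : ∀ j, (p (k (φs j))).eval w = ∏ i, (w - g (φs j) i) := by
      intro j
      rw [hevalprod, ← hg (φs j), Multiset.map_map, Finset.prod_eq_multiset_prod]
      rfl
    rw [show (fun j => (p (k (φs j))).eval w) = fun j => ∏ i, (w - g (φs j) i)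
      from funext h3] at h1
    exact tendsto_nhds_unique h1 h2
  have hp0 : p k₀ = ∏ i, (Polynomial.X - Polynomial.C (z i)) :=
    Polynomial.funext fun w => by
      rw [key w, Polynomial.eval_prod]
      simp
  have hroots0 : (p k₀).roots = Multiset.map z Finset.univ.val := by
    rw [hp0, Finset.prod_eq_multiset_prod]
    have h := Polynomial.roots_multiset_prod_X_sub_C (Multiset.map z Finset.univ.val)
    rw [Multiset.map_map] at h
    exact h
  -- dichotomy for limit roots
  have hdich : ∀ i, z i = 1 ∨ (z i).re < c := by
    intro i
    by_cases h1 : z i = 1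
    · exact Or.inl h1
    · right
      by_contra hre
      push_neg at hre
      set a := (z i).arg with ha
      have hz0 : z i ≠ 0 := fun h0 => by
        have := hzabs i
        rw [h0] at this
        simp at this
      have hzexp : Complex.exp (Complex.I * a) = z i := by
        rw [mul_comm]
        have := Complex.norm_mul_exp_arg_mul_I (z i)
        rw [hzabs i] at this
        simpa using this
      have hcos : Real.cos a = (z i).re := by
        rw [ha, Complex.cos_arg hz0, hzabs i, div_one]
      have hb : |a| ≤ Real.pi := Complex.abs_arg_le_pi _
      have ha0 : a ≠ 0 := by
        intro h0
        rw [h0] at hzexp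
        simp at hzexp
        exact h1 hzexp.symm
      have hle : |a| ≤ θ₀ := by
        by_contra hgt
        push_neg at hgt
        have := Real.strictAntiOn_cos ⟨hθpos.le, hθpi.le⟩ ⟨abs_nonneg _, hb⟩ hgt
        rw [Real.cos_abs, hcos] at this
        rw [hc] at hre
        linarith
      refine hgap a (abs_pos.mpr ha0) hle ?_
      show (p k₀).IsRoot _
      rw [Polynomial.IsRoot, hzexp]
      refine Polynomial.isRoot_of_mem_roots ?_
      rw [hroots0]
      exact Multiset.mem_map_of_mem _ (Finset.mem_univ_val _)
  -- m equals the number of limit roots equal to 1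
  have hm' : m = (Finset.univ.filter fun i => z i = 1).card := by
    rw [hm, ← Polynomial.count_roots]
    show Multiset.count 1 (p k₀).roots = _
    rw [hroots0, Multiset.count_map]
    have heq : (Multiset.filter (fun a => 1 = z a) Finset.univ.val) =
        (Finset.filter (fun i => z i = 1) Finset.univ).val := by
      rw [Finset.filter_val]
      exact Multiset.filter_congr (fun a _ => by constructor <;> (intro h; exact h.symm))
    rw [heq, Finset.card_def]
  -- the eventual separation
  have hev : ∀ᶠ j in Filter.atTop, ∀ i,
      (z i = 1 → c < (g (φs j) i).re) ∧ (z i ≠ 1 → (g (φs j) i).re < c) := by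
    rw [Filter.eventually_all]
    intro i
    have htendi : Filter.Tendsto (fun j => (g (φs j) i).re) Filter.atTop (nhds (z i).re) :=
      (Complex.continuous_re.tendsto _).comp (((continuous_apply i).tendsto z).comp hφtend)
    have hcle : c ≤ 1 := Real.cos_le_one θ₀
    have hclt : c < 1 := by
      have := Real.strictAntiOn_cos ⟨le_rfl, Real.pi_pos.le⟩ ⟨hθpos.le, hθpi.le⟩ hθpos
      simpa [hc] using this
    rcases hdich i with h | h
    · have hlt : c < (z i).re := by rw [h]; simpa using hclt
      filter_upwards [htendi.eventually (eventually_gt_nhds hlt)] with j hj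
      exact ⟨fun _ => hj, fun hne => absurd h hne⟩
    · filter_upwards [htendi.eventually (eventually_lt_nhds h)] with j hj
      refine ⟨fun h1 => ?_, fun _ => hj⟩
      rw [h1] at h
      simp at h
      linarith
  obtain ⟨j, hj⟩ := hev.exists
  -- at the index j, contradiction with badness
  have hre_ne : ∀ i, (g (φs j) i).re ≠ c := by
    intro i
    rcases hdich i with h | h
    · exact ne_of_gt ((hj i).1 h)
    · have h1 : z i ≠ 1 := by
        intro he; rw [he] at h; simp at h; linarith [Real.cos_le_one θ₀]
      exact ne_of_lt ((hj i).2 h1)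
  have hmem_re : ∀ w : ℂ, (p (k (φs j))).IsRoot w → ∃ i, g (φs j) i = w := by
    intro w hw
    have : w ∈ (p (k (φs j))).roots := (Polynomial.mem_roots (hpne _)).mpr hw
    rw [← hg (φs j)] at this
    obtain ⟨i, _, hi⟩ := Multiset.mem_map.mp this
    exact ⟨i, hi⟩
  have hgood1 : ¬ (p (k (φs j))).IsRoot (Complex.exp (Complex.I * θ₀)) := by
    intro hr
    obtain ⟨i, hi⟩ := hmem_re _ hr
    refine hre_ne i ?_
    rw [hi, mul_comm, Complex.exp_ofReal_mul_I_re, hc]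
  have hgood2 : ¬ (p (k (φs j))).IsRoot (Complex.exp (-(Complex.I * θ₀))) := by
    intro hr
    obtain ⟨i, hi⟩ := hmem_re _ hr
    refine hre_ne i ?_
    have heq : -(Complex.I * (θ₀ : ℂ)) = ((-θ₀ : ℝ) : ℂ) * Complex.I := by
      push_cast; ring
    rw [hi, heq, Complex.exp_ofReal_mul_I_re, Real.cos_neg, hc]
  have hcount : Multiset.countP
      (fun w => ∃ φ : ℝ, |φ| < θ₀ ∧ w = Complex.exp (Complex.I * φ))
      (p (k (φs j))).roots = m := by
    rw [← hg (φs j), Multiset.countP_map, hm']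
    have heq : (Multiset.filter
          (fun a => ∃ φ : ℝ, |φ| < θ₀ ∧ g (φs j) a = Complex.exp (Complex.I * φ))
          Finset.univ.val) =
        (Finset.filter (fun i => z i = 1) Finset.univ).val := by
      rw [Finset.filter_val]
      refine Multiset.filter_congr (fun i _ => ?_)
      constructor
      · intro hP
        have hgt := (mem_arc hθpos hθpi (habs (φs j) i)).mp hP
        rw [← hc] at hgt
        by_contra h1
        have hlt := (hj i).2 h1
        linarith
      · intro h1
        refine (mem_arc hθpos hθpi (habs (φs j) i)).mpr ?_
        rw [← hc]
        exact (hj i).1 h1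
    rw [heq, Finset.card_def]
  exact hbad (φs j) ⟨hgood1, hgood2⟩ hcount
end

section
/- Let f : ℝ → Mₙ(ℂ) be continuous (entrywise) with f(k) unitary for every k, let I ⊆ ℝ be an interval, and let θ₀ ∈ (0,π). Suppose that for every k ∈ I, f(k) has no eigenvalue equal to 1, e^{iθ₀}, or e^{−iθ₀}. Then the function assigning to k ∈ I the number of eigenvalues of f(k), counted with algebraic multiplicity, of the form e^{iφ} with 0 < φ < θ₀, is constant on I. -/
open Matrix Polynomial
open scoped Classical ComplexOrder

section EigCountAux

lemma eigAux_eval_charpoly {n : ℕ} (M : Matrix (Fin n) (Fin n) ℂ) (z : ℂ) :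
    (M.charpoly).eval z = (z • (1 : Matrix (Fin n) (Fin n) ℂ) - M).det := by
  rw [Matrix.charpoly, show eval z M.charmatrix.det = (evalRingHom z) (M.charmatrix.det) from rfl,
    RingHom.map_det]
  congr 1
  ext i j
  by_cases h : i = j
  · subst h; simp [charmatrix_apply_eq, Matrix.one_apply]
  · simp [charmatrix_apply_ne _ _ _ h, Matrix.one_apply, h]

lemma eigAux_root_abs_one {n : ℕ} (M : Matrix (Fin n) (Fin n) ℂ)
    (hM : M ∈ Matrix.unitaryGroup (Fin n) ℂ) (z : ℂ) (hz : M.charpoly.IsRoot z) :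
    ‖z‖ = 1 := by
  have hdet : (z • (1 : Matrix (Fin n) (Fin n) ℂ) - M).det = 0 := by
    rw [← eigAux_eval_charpoly]; exact hz
  obtain ⟨v, hv, hv2⟩ := (Matrix.exists_mulVec_eq_zero_iff).2 hdet
  rw [Matrix.sub_mulVec, sub_eq_zero, Matrix.smul_mulVec, Matrix.one_mulVec] at hv2
  have key : star (M *ᵥ v) ⬝ᵥ (M *ᵥ v) = star v ⬝ᵥ v := by
    rw [Matrix.star_mulVec, Matrix.dotProduct_mulVec, Matrix.vecMul_vecMul,
      show (Mᴴ * M) = 1 from hM.1, Matrix.vecMul_one]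
  rw [← hv2] at key
  have h3 : star z * z * (star v ⬝ᵥ v) = star v ⬝ᵥ v := by
    rw [star_smul, smul_dotProduct, dotProduct_smul, smul_smul, smul_eq_mul] at key
    exact key
  have hne : star v ⬝ᵥ v ≠ 0 := fun h => hv (dotProduct_star_self_eq_zero.1 h)
  have h1 : star z * z = 1 := mul_right_cancel₀ hne (by rw [h3, one_mul])
  have h4 := congrArg norm h1
  rw [norm_mul, Complex.star_def, Complex.norm_conj, norm_one] at h4
  nlinarith [norm_nonneg z]

lemma eigAux_roots_card {n : ℕ} (M : Matrix (Fin n) (Fin n) ℂ) :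
    M.charpoly.roots.card = n := by
  have hs : M.charpoly.Splits := IsAlgClosed.splits _
  rw [splits_iff_card_roots.1 hs, Matrix.charpoly_natDegree_eq_dim, Fintype.card_fin]

lemma eigAux_fact {n : ℕ} (M : Matrix (Fin n) (Fin n) ℂ) :
    M.charpoly = (M.charpoly.roots.map (fun a => X - C a)).prod :=
  (IsAlgClosed.splits _).eq_prod_roots_of_monic M.charpoly_monic

lemma eigAux_coe_list_eq {m : ℕ} (l : List ℂ) (h : l.length = m) :
    (↑l : Multiset ℂ)
      = Multiset.map (fun i : Fin m => l.get (Fin.cast h.symm i)) Finset.univ.val := by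
  subst h
  simp only [Fin.cast_refl]
  rw [show (Finset.univ.val : Multiset (Fin l.length)) = ↑(List.finRange l.length) from rfl,
    Multiset.map_coe, ← List.ofFn_eq_map]
  simp [List.ofFn_get]

lemma eigAux_isOpen_arcSet {θ₀ : ℝ} :
    IsOpen {z : ℂ | z ∈ Complex.slitPlane ∧ Complex.arg z ∈ Set.Ioo 0 θ₀} :=
  ContinuousOn.isOpen_inter_preimage
    (fun _ hz => (Complex.continuousAt_arg hz).continuousWithinAt)
    Complex.isOpen_slitPlane isOpen_Ioo

lemma eigAux_mem_arcSet_iff {θ₀ : ℝ} (hπ : θ₀ < Real.pi) (z : ℂ)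
    (hz : ‖z‖ = 1) :
    (∃ φ : ℝ, 0 < φ ∧ φ < θ₀ ∧ z = Complex.exp (Complex.I * φ))
      ↔ z ∈ Complex.slitPlane ∧ Complex.arg z ∈ Set.Ioo 0 θ₀ := by
  constructor
  · rintro ⟨φ, hφ0, hφθ, rfl⟩
    have harg : Complex.arg (Complex.exp (Complex.I * φ)) = φ := by
      rw [mul_comm, Complex.exp_mul_I]
      exact Complex.arg_cos_add_sin_mul_I ⟨by linarith [Real.pi_pos], by linarith⟩
    refine ⟨?_, by rw [harg]; exact ⟨hφ0, hφθ⟩⟩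
    rw [Complex.mem_slitPlane_iff]
    right
    rw [mul_comm, Complex.exp_mul_I]
    simp only [Complex.add_im, Complex.ofReal_cos, Complex.cos_ofReal_im, Complex.mul_im]
    have : Real.sin φ > 0 := Real.sin_pos_of_pos_of_lt_pi hφ0 (by linarith)
    simp [Complex.ofReal_sin]
    positivity
  · rintro ⟨hsp, h1, h2⟩
    refine ⟨Complex.arg z, h1, h2, ?_⟩
    rw [mul_comm]
    conv_lhs => rw [← Complex.norm_mul_exp_arg_mul_I z]
    rw [hz]
    simp

/-- Local constancy of the eigenvalue count. -/
lemma eigAux_loc_const {n : ℕ} (f : ℝ → Matrix (Fin n) (Fin n) ℂ)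
    (hcont : ∀ i j : Fin n, Continuous fun k => f k i j)
    (hunit : ∀ k : ℝ, f k ∈ Matrix.unitaryGroup (Fin n) ℂ)
    (S : Set ℝ)
    (θ₀ : ℝ) (hθ₀ : 0 < θ₀ ∧ θ₀ < Real.pi)
    (hroot : ∀ k ∈ S,
      ¬ (f k).charpoly.IsRoot 1 ∧
      ¬ (f k).charpoly.IsRoot (Complex.exp (Complex.I * θ₀)) ∧
      ¬ (f k).charpoly.IsRoot (Complex.exp (-(Complex.I * θ₀))))
    (k₀ : ℝ) (hk₀ : k₀ ∈ S) :
    ∀ᶠ k in nhdsWithin k₀ S,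
      Multiset.countP
          (fun z => ∃ φ : ℝ, 0 < φ ∧ φ < θ₀ ∧ z = Complex.exp (Complex.I * φ))
          (f k).charpoly.roots
        = Multiset.countP
          (fun z => ∃ φ : ℝ, 0 < φ ∧ φ < θ₀ ∧ z = Complex.exp (Complex.I * φ))
          (f k₀).charpoly.roots := by
  set P : ℂ → Prop := fun z => ∃ φ : ℝ, 0 < φ ∧ φ < θ₀ ∧ z = Complex.exp (Complex.I * φ) with hP
  set N : ℝ → ℕ := fun k => Multiset.countP P (f k).charpoly.roots with hN
  by_contra hcon
  have hfreq : ∃ᶠ k in nhdsWithin k₀ S, (N k ≠ N k₀ ∧ k ∈ S) :=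
    (Filter.not_eventually.1 hcon).and_eventually self_mem_nhdsWithin
  obtain ⟨u, hu, hup⟩ := Filter.exists_seq_forall_of_frequently hfreq
  have huk : Filter.Tendsto u Filter.atTop (nhds k₀) := hu.mono_right nhdsWithin_le_nhds
  -- enumerate the roots of `f (u j)`
  have hLlen : ∀ j, ((f (u j)).charpoly.roots.toList.length) = n := by
    intro j; rw [Multiset.length_toList, eigAux_roots_card]
  set r : ℕ → Fin n → ℂ :=
    fun j i => ((f (u j)).charpoly.roots.toList).get (Fin.cast (hLlen j).symm i) with hr
  have hmemr : ∀ j, (f (u j)).charpoly.roots = Multiset.map (r j) Finset.univ.val := by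
    intro j
    conv_lhs => rw [← Multiset.coe_toList (f (u j)).charpoly.roots]
    exact eigAux_coe_list_eq _ (hLlen j)
  have hrroot : ∀ j i, (f (u j)).charpoly.IsRoot (r j i) := by
    intro j i
    have : r j i ∈ (f (u j)).charpoly.roots := by
      rw [hmemr j]
      exact Multiset.mem_map.2 ⟨i, Finset.mem_univ i, rfl⟩
    exact (Polynomial.mem_roots ((f (u j)).charpoly_monic.ne_zero)).1 this
  have hrabs : ∀ j i, ‖r j i‖ = 1 :=
    fun j i => eigAux_root_abs_one _ (hunit _) _ (hrroot j i)
  -- extract a convergent subsequence of root tuples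
  have hcpt : IsCompact (Set.univ.pi fun _ : Fin n => Metric.sphere (0 : ℂ) 1) :=
    isCompact_univ_pi fun _ => isCompact_sphere 0 1
  have hrmem : ∀ j, r j ∈ Set.univ.pi fun _ : Fin n => Metric.sphere (0 : ℂ) 1 := by
    intro j
    intro i _
    simp only [Metric.mem_sphere, Complex.dist_eq, sub_zero]
    exact hrabs j i
  obtain ⟨g, hg, ψ, hψ, hψt⟩ := hcpt.tendsto_subseq hrmem
  have hgi : ∀ i, Filter.Tendsto (fun j => r (ψ j) i) Filter.atTop (nhds (g i)) :=
    fun i => tendsto_pi_nhds.1 hψt i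
  -- identify the limit polynomial
  have hpeq : (f k₀).charpoly
      = ((Multiset.map g Finset.univ.val).map (fun a => X - C a)).prod := by
    apply Polynomial.funext
    intro z
    have h1 : Filter.Tendsto (fun j => eval z (f (u (ψ j))).charpoly) Filter.atTop
        (nhds (eval z (f k₀).charpoly)) := by
      have hc : Continuous fun k : ℝ =>
          (z • (1 : Matrix (Fin n) (Fin n) ℂ) - f k).det :=
        Continuous.matrix_det (continuous_const.sub (continuous_matrix fun i j => hcont i j))
      have := (hc.tendsto k₀).comp (huk.comp (hψ.tendsto_atTop))
      simpa only [Function.comp_def, eigAux_eval_charpoly] using this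
    have h2 : Filter.Tendsto (fun j => eval z (f (u (ψ j))).charpoly) Filter.atTop
        (nhds (∏ i : Fin n, (z - g i))) := by
      have heval : ∀ j, eval z (f (u (ψ j))).charpoly = ∏ i : Fin n, (z - r (ψ j) i) := by
        intro j
        conv_lhs => rw [eigAux_fact, hmemr (ψ j)]
        rw [Polynomial.eval_multiset_prod, Multiset.map_map, Multiset.map_map]
        rw [Finset.prod_eq_multiset_prod]
        congr 1
        apply Multiset.map_congr rfl
        intro i _
        simp
      rw [show (fun j => eval z (f (u (ψ j))).charpoly)
          = fun j => ∏ i : Fin n, (z - r (ψ j) i) from funext heval]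
      exact tendsto_finset_prod _ fun i _ => tendsto_const_nhds.sub (hgi i)
    have h3 := tendsto_nhds_unique h1 h2
    rw [h3, Polynomial.eval_multiset_prod, Multiset.map_map, Multiset.map_map,
      Finset.prod_eq_multiset_prod]
    congr 1
    apply Multiset.map_congr rfl
    intro i _
    simp
  have hroots0 : (f k₀).charpoly.roots = Multiset.map g Finset.univ.val := by
    rw [hpeq, Polynomial.roots_multiset_prod_X_sub_C]
  have hgroot : ∀ i, (f k₀).charpoly.IsRoot (g i) := by
    intro i
    have : g i ∈ (f k₀).charpoly.roots := by
      rw [hroots0]; exact Multiset.mem_map.2 ⟨i, Finset.mem_univ i, rfl⟩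
    exact (Polynomial.mem_roots ((f k₀).charpoly_monic.ne_zero)).1 this
  have hgabs : ∀ i, ‖g i‖ = 1 :=
    fun i => eigAux_root_abs_one _ (hunit _) _ (hgroot i)
  obtain ⟨h1root, hθroot, _⟩ := hroot k₀ hk₀
  -- eventually, membership of each root in the arc agrees with the limit
  have hev : ∀ i : Fin n, ∀ᶠ j in Filter.atTop, (P (r (ψ j) i) ↔ P (g i)) := by
    intro i
    by_cases hPg : P (g i)
    · have hmem : g i ∈ {z : ℂ | z ∈ Complex.slitPlane ∧ Complex.arg z ∈ Set.Ioo 0 θ₀} :=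
        (eigAux_mem_arcSet_iff hθ₀.2 _ (hgabs i)).1 hPg
      have := (hgi i).eventually (eigAux_isOpen_arcSet.eventually_mem hmem)
      filter_upwards [this] with j hj
      exact iff_of_true ((eigAux_mem_arcSet_iff hθ₀.2 _ (hrabs (ψ j) i)).2 hj) hPg
    · set K : Set ℂ := (fun t : ℝ => Complex.exp (Complex.I * t)) '' Set.Icc 0 θ₀ with hK
      have hKc : IsCompact K :=
        isCompact_Icc.image
          (Complex.continuous_exp.comp (continuous_const.mul Complex.continuous_ofReal))
      have hgK : g i ∉ K := by
        rintro ⟨t, ht, heq⟩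
        rcases eq_or_lt_of_le ht.1 with h0 | h0
        · apply h1root
          have : g i = 1 := by
            rw [← heq, ← h0]; simp
          rw [← this]; exact hgroot i
        rcases eq_or_lt_of_le ht.2 with hθ | hθ
        · apply hθroot
          have : g i = Complex.exp (Complex.I * θ₀) := by rw [← heq, hθ]
          rw [← this]; exact hgroot i
        · exact hPg ⟨t, h0, hθ, heq.symm⟩
      have hopen : IsOpen Kᶜ := hKc.isClosed.isOpen_compl
      have := (hgi i).eventually (hopen.eventually_mem hgK)
      filter_upwards [this] with j hj
      refine iff_of_false (fun hPr => hj ?_) hPg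
      obtain ⟨φ, hφ0, hφθ, hφ⟩ := hPr
      exact ⟨φ, ⟨le_of_lt hφ0, le_of_lt hφθ⟩, hφ.symm⟩
  have hevall : ∀ᶠ j in Filter.atTop, ∀ i : Fin n, (P (r (ψ j) i) ↔ P (g i)) :=
    Filter.eventually_all.2 hev
  obtain ⟨j, hj⟩ := hevall.exists
  apply (hup (ψ j)).1
  have hcount : N (u (ψ j)) = N k₀ := by
    simp only [hN]
    rw [hmemr (ψ j), hroots0, Multiset.countP_map, Multiset.countP_map]
    congr 1
    apply Multiset.filter_congr
    intro i _
    exact hj i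
  exact hcount

end EigCountAux

/-- If `f` is a continuous unitary-valued family and, on an interval `S`, `f(k)` never has an
eigenvalue equal to `1`, `e^{iθ₀}` or `e^{-iθ₀}`, then the number of eigenvalues of `f(k)`
(counted with algebraic multiplicity) of the form `e^{iφ}` with `0 < φ < θ₀` is constant on
`S`. -/
theorem eigCount_constant {n : ℕ} (f : ℝ → Matrix (Fin n) (Fin n) ℂ)
    (hcont : ∀ i j : Fin n, Continuous fun k => f k i j)
    (hunit : ∀ k : ℝ, f k ∈ Matrix.unitaryGroup (Fin n) ℂ)
    (S : Set ℝ) (hS : S.OrdConnected)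
    (θ₀ : ℝ) (hθ₀ : 0 < θ₀ ∧ θ₀ < Real.pi)
    (hroot : ∀ k ∈ S,
      ¬ (f k).charpoly.IsRoot 1 ∧
      ¬ (f k).charpoly.IsRoot (Complex.exp (Complex.I * θ₀)) ∧
      ¬ (f k).charpoly.IsRoot (Complex.exp (-(Complex.I * θ₀)))) :
    ∀ k₁ ∈ S, ∀ k₂ ∈ S,
      Multiset.countP
          (fun z => ∃ φ : ℝ, 0 < φ ∧ φ < θ₀ ∧ z = Complex.exp (Complex.I * φ))
          (f k₁).charpoly.roots
        = Multiset.countP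
            (fun z => ∃ φ : ℝ, 0 < φ ∧ φ < θ₀ ∧ z = Complex.exp (Complex.I * φ))
            (f k₂).charpoly.roots := by
  intro k₁ hk₁ k₂ hk₂
  set N : ℝ → ℕ := fun k => Multiset.countP
      (fun z => ∃ φ : ℝ, 0 < φ ∧ φ < θ₀ ∧ z = Complex.exp (Complex.I * φ))
      (f k).charpoly.roots with hN
  have hNcont : ContinuousOn N S := by
    intro k₀ hk₀
    have h := eigAux_loc_const f hcont hunit S θ₀ hθ₀ hroot k₀ hk₀
    exact tendsto_const_nhds.congr' (h.mono fun x hx => hx.symm)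
  have hpre : IsPreconnected S := isPreconnected_iff_ordConnected.2 hS
  have himg : IsPreconnected (N '' S) := hpre.image N hNcont
  have hsub : (N '' S).Subsingleton := himg.subsingleton
  exact hsub ⟨k₁, hk₁, rfl⟩ ⟨k₂, hk₂, rfl⟩
end
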